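/- Let n ≥ 2 be an integer, r > 0, and f : [0,r] → ℝ a C² function with f(0) = 0, f'(0) = 1, and f(t) > 0 for all t ∈ (0,r]. Let λ ∈ ℝ and let φ : [0,r] → ℝ be a radial first eigenfunction with eigenvalue λ, i.e. φ is C² on [0,r], φ(t) > 0 for t ∈ [0,r), φ(r) = 0, φ'(0) = 0, and φ''(t) + (n−1)(f'(t)/f(t))φ'(t) + λφ(t) = 0 on (0,r). Let u : [0,r] → ℝ be continuous with u ≥ 0 and not identically zero, and suppose c ∈ ℝ satisfies u(t) ≥ c·T(u)(t) for all t ∈ [0,r]. Then λ ≥ c. (Equivalently, λ ≥ inf over t ∈ [0,r) of the quotient h(t,u) = u(t)/T(u)(t).) -/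

import Mathlib

open Set intervalIntegral

/-- The operator `T` from Barroso–Bessa: `T u t = ∫_t^r f(σ)^{-(n-1)} ∫_0^σ f(s)^{n-1} u(s) ds dσ`. -/
noncomputable def BBop (n : ℕ) (r : ℝ) (f u : ℝ → ℝ) (t : ℝ) : ℝ :=
  ∫ σ in t..r, (1 / f σ ^ (n - 1)) * ∫ s in (0:ℝ)..σ, f s ^ (n - 1) * u s

set_option maxHeartbeats 2000000 in
/-- Lower-bound half of Theorem 1: if `φ` is a positive radial first eigenfunction with
eigenvalue `λ`, and `u ≥ 0` not identically zero satisfies `u ≥ c · T(u)` on `[0,r]`,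
then `λ ≥ c`. -/
theorem stmt4 (n : ℕ) (hn : 2 ≤ n) (r : ℝ) (hr : 0 < r)
    (f : ℝ → ℝ) (hf : ContDiffOn ℝ 2 f (Set.Icc 0 r))
    (hf0 : f 0 = 0) (hf'0 : derivWithin f (Set.Icc 0 r) 0 = 1)
    (hfpos : ∀ t ∈ Set.Ioc (0:ℝ) r, 0 < f t)
    (lam : ℝ) (φ : ℝ → ℝ) (hφ : ContDiffOn ℝ 2 φ (Set.Icc 0 r))
    (hφpos : ∀ t ∈ Set.Ico (0:ℝ) r, 0 < φ t) (hφr : φ r = 0)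
    (hφ'0 : derivWithin φ (Set.Icc 0 r) 0 = 0)
    (hφode : ∀ t ∈ Set.Ioo (0:ℝ) r,
      deriv (deriv φ) t + ((n : ℝ) - 1) * (deriv f t / f t) * deriv φ t + lam * φ t = 0)
    (u : ℝ → ℝ) (hu : ContinuousOn u (Set.Icc 0 r))
    (hunonneg : ∀ t ∈ Set.Icc (0:ℝ) r, 0 ≤ u t)
    (hune : ∃ t ∈ Set.Icc (0:ℝ) r, u t ≠ 0)
    (c : ℝ) (hc : ∀ t ∈ Set.Icc (0:ℝ) r, c * BBop n r f u t ≤ u t) :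
    c ≤ lam := by
  by_contra hlc
  push_neg at hlc
  have hn1 : 1 ≤ n := le_trans one_le_two hn
  have hIoo_sub : Set.Ioo (0:ℝ) r ⊆ Set.Icc 0 r := Set.Ioo_subset_Icc_self
  have hIoc_sub : Set.Ioc (0:ℝ) r ⊆ Set.Icc 0 r := Set.Ioc_subset_Icc_self
  have hIooIoc : Set.Ioo (0:ℝ) r ⊆ Set.Ioc 0 r := Set.Ioo_subset_Ioc_self
  have hOpen : IsOpen (Set.Ioo (0:ℝ) r) := isOpen_Ioo
  have hfc : ContinuousOn f (Set.Icc 0 r) := hf.continuousOn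
  have hφc : ContinuousOn φ (Set.Icc 0 r) := hφ.continuousOn
  have hUD : UniqueDiffOn ℝ (Set.Icc (0:ℝ) r) := uniqueDiffOn_Icc hr
  have hf'c : ContinuousOn (derivWithin f (Set.Icc 0 r)) (Set.Icc 0 r) :=
    hf.continuousOn_derivWithin hUD one_le_two
  have hφ'c : ContinuousOn (derivWithin φ (Set.Icc 0 r)) (Set.Icc 0 r) :=
    hφ.continuousOn_derivWithin hUD one_le_two
  have hfnn : ∀ s ∈ Set.Icc (0:ℝ) r, 0 ≤ f s := by
    intro s hs
    rcases eq_or_lt_of_le hs.1 with h | h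
    · simp [← h, hf0]
    · exact (hfpos s ⟨h, hs.2⟩).le
  -- the basic functions
  set F : ℝ → ℝ := fun s => f s ^ (n - 1) * u s with hFdef
  set A : ℝ → ℝ := fun t => ∫ s in (0:ℝ)..t, F s with hAdef
  set g : ℝ → ℝ := fun σ => (1 / f σ ^ (n - 1)) * A σ with hgdef
  set v : ℝ → ℝ := fun t => ∫ σ in t..r, g σ with hvdef
  have hBB : ∀ t, BBop n r f u t = v t := fun t => rfl
  have hFc : ContinuousOn F (Set.Icc 0 r) := (hfc.pow _).mul hu
  have hFnn : ∀ s ∈ Set.Icc (0:ℝ) r, 0 ≤ F s := fun s hs =>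
    mul_nonneg (pow_nonneg (hfnn s hs) _) (hunonneg s hs)
  have hFi : ∀ a b : ℝ, a ∈ Set.Icc (0:ℝ) r → b ∈ Set.Icc (0:ℝ) r →
      IntervalIntegrable F MeasureTheory.volume a b := by
    intro a b ha hb
    refine (hFc.mono ?_).intervalIntegrable
    intro x hx
    exact ⟨le_trans (le_min ha.1 hb.1) hx.1, le_trans hx.2 (max_le ha.2 hb.2)⟩
  have hAc : ContinuousOn A (Set.Icc 0 r) := by
    rw [hAdef]
    have huI : Set.uIcc (0:ℝ) r = Set.Icc 0 r := Set.uIcc_of_le hr.le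
    rw [← huI]
    exact intervalIntegral.continuousOn_primitive_interval (by rw [huI]; exact hFc.integrableOn_Icc)
  have hAnn : ∀ σ ∈ Set.Icc (0:ℝ) r, 0 ≤ A σ := by
    intro σ hσ
    exact intervalIntegral.integral_nonneg hσ.1
      (fun s hs => hFnn s ⟨hs.1, le_trans hs.2 hσ.2⟩)
  have hgc : ContinuousOn g (Set.Ioc 0 r) := by
    rw [hgdef]
    refine ContinuousOn.mul (ContinuousOn.div continuousOn_const
      ((hfc.mono hIoc_sub).pow _) ?_) (hAc.mono hIoc_sub)
    intro x hx
    exact pow_ne_zero _ (ne_of_gt (hfpos x hx))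
  have hgnn : ∀ σ ∈ Set.Ioc (0:ℝ) r, 0 ≤ g σ := by
    intro σ hσ
    exact mul_nonneg (div_nonneg zero_le_one (pow_nonneg (hfnn σ (hIoc_sub hσ)) _))
      (hAnn σ (hIoc_sub hσ))
  have hgi : ∀ a b : ℝ, a ∈ Set.Ioc (0:ℝ) r → b ∈ Set.Ioc (0:ℝ) r →
      IntervalIntegrable g MeasureTheory.volume a b := by
    intro a b ha hb
    refine (hgc.mono ?_).intervalIntegrable
    intro x hx
    exact ⟨lt_of_lt_of_le (lt_min ha.1 hb.1) hx.1, le_trans hx.2 (max_le ha.2 hb.2)⟩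
  -- derivative of A
  have hA' : ∀ t ∈ Set.Ioo (0:ℝ) r, HasDerivAt A (F t) t := by
    intro t ht
    exact intervalIntegral.integral_hasDerivAt_right
      (hFi 0 t ⟨le_refl 0, hr.le⟩ (hIoo_sub ht))
      ((hFc.mono hIoo_sub).stronglyMeasurableAtFilter hOpen t ht)
      ((hFc t (hIoo_sub ht)).continuousAt (Icc_mem_nhds ht.1 ht.2))
  -- derivative of v
  have hv' : ∀ t ∈ Set.Ioo (0:ℝ) r, HasDerivAt v (-(g t)) t := by
    intro t ht
    have hveq : v = fun x => -(∫ σ in r..x, g σ) := by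
      funext x
      simp only [hvdef]
      exact intervalIntegral.integral_symm r x
    rw [hveq]
    exact (intervalIntegral.integral_hasDerivAt_right
      (hgi r t ⟨hr, le_rfl⟩ (hIooIoc ht))
      ((hgc.mono hIooIoc).stronglyMeasurableAtFilter hOpen t ht)
      ((hgc t (hIooIoc ht)).continuousAt
        (Filter.mem_of_superset (hOpen.mem_nhds ht) hIooIoc))).neg
  -- derivatives of f and φ
  have hfd : ∀ t ∈ Set.Ioo (0:ℝ) r, HasDerivAt f (deriv f t) t := fun t ht =>
    ((hf.contDiffAt (Icc_mem_nhds ht.1 ht.2)).differentiableAt two_ne_zero).hasDerivAt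
  have hφd : ∀ t ∈ Set.Ioo (0:ℝ) r, HasDerivAt φ (deriv φ t) t := fun t ht =>
    ((hφ.contDiffAt (Icc_mem_nhds ht.1 ht.2)).differentiableAt two_ne_zero).hasDerivAt
  have hφ1 : ContDiffOn ℝ 1 (deriv φ) (Set.Ioo 0 r) :=
    (hφ.mono hIoo_sub).deriv_of_isOpen hOpen (by norm_num)
  have hφdd : ∀ t ∈ Set.Ioo (0:ℝ) r, HasDerivAt (deriv φ) (deriv (deriv φ) t) t := fun t ht =>
    ((hφ1.contDiffAt (hOpen.mem_nhds ht)).differentiableAt one_ne_zero).hasDerivAt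
  -- the function P = f^{n-1} φ' and its derivative
  set P : ℝ → ℝ := fun t => f t ^ (n - 1) * deriv φ t with hPdef
  have hP' : ∀ t ∈ Set.Ioo (0:ℝ) r, HasDerivAt P (-(lam * (f t ^ (n - 1) * φ t))) t := by
    intro t ht
    have hft : (0:ℝ) < f t := hfpos t (hIooIoc ht)
    have h1 : HasDerivAt (fun x => f x ^ (n - 1))
        (((n - 1 : ℕ) : ℝ) * f t ^ (n - 1 - 1) * deriv f t) t := (hfd t ht).pow _
    have h2 : HasDerivAt (fun x => f x ^ (n - 1) * deriv φ x) _ t := h1.mul (hφdd t ht)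
    rw [hPdef]
    convert h2 using 1
    have hode := hφode t ht
    have hcast : ((n - 1 : ℕ) : ℝ) = (n : ℝ) - 1 := by
      push_cast [Nat.cast_sub hn1]; ring
    have hexp : n - 1 - 1 = n - 2 := by omega
    have hpow : f t ^ (n - 1) = f t ^ (n - 2) * f t := by
      rw [← pow_succ]
      congr 1
      omega
    have key : f t ^ (n - 1) * (deriv f t / f t) = f t ^ (n - 2) * deriv f t := by
      rw [hpow]
      field_simp
    have hφ'' : deriv (deriv φ) t
        = -(((n : ℝ) - 1) * (deriv f t / f t) * deriv φ t + lam * φ t) := by linarith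
    rw [hφ'', hcast, hexp]
    linear_combination (((n : ℝ) - 1) * deriv φ t) * key
  -- the Wronskian-type function W and its derivative
  set W : ℝ → ℝ := fun t => P t * v t + φ t * A t with hWdef
  have hW' : ∀ t ∈ Set.Ioo (0:ℝ) r,
      HasDerivAt W (f t ^ (n - 1) * φ t * (u t - lam * v t)) t := by
    intro t ht
    have hft : (0:ℝ) < f t := hfpos t (hIooIoc ht)
    have hfne : f t ^ (n - 1) ≠ 0 := pow_ne_zero _ hft.ne'
    have hD : HasDerivAt (fun x => P x * v x + φ x * A x) _ t := ((hP' t ht).mul (hv' t ht)).add ((hφd t ht).mul (hA' t ht))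
    rw [hWdef]
    convert hD using 1
    simp only [hPdef, hgdef, hFdef]
    field_simp
    ring
  -- nonnegativity of v
  have hvnn : ∀ t ∈ Set.Ioc (0:ℝ) r, 0 ≤ v t := by
    intro t ht
    rw [hvdef]
    exact intervalIntegral.integral_nonneg ht.2
      (fun σ hσ => hgnn σ ⟨lt_of_lt_of_le ht.1 hσ.1, hσ.2⟩)
  -- W is monotone on (0, r)
  have hWmono : MonotoneOn W (Set.Ioo 0 r) := by
    apply monotoneOn_of_deriv_nonneg (convex_Ioo 0 r)
    · intro x hx
      exact (hW' x hx).continuousAt.continuousWithinAt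
    · rw [interior_Ioo]
      intro x hx
      exact (hW' x hx).differentiableAt.differentiableWithinAt
    · rw [interior_Ioo]
      intro x hx
      rw [(hW' x hx).deriv]
      have hux : c * v x ≤ u x := by rw [← hBB x]; exact hc x (hIoo_sub hx)
      have hvx : 0 ≤ v x := hvnn x (hIooIoc hx)
      have hfx : (0:ℝ) < f x := hfpos x (hIooIoc hx)
      have hφx : 0 < φ x := hφpos x ⟨hx.1.le, hx.2⟩
      have h1 : 0 ≤ u x - lam * v x := by nlinarith
      positivity
  -- a uniform bound on u
  obtain ⟨U, hU⟩ := isCompact_Icc.exists_bound_of_continuousOn hu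
  have hU0 : 0 ≤ U := le_trans (norm_nonneg _) (hU 0 ⟨le_rfl, hr.le⟩)
  -- a small interval on which f is monotone
  have hf'cont : ContinuousWithinAt (derivWithin f (Set.Icc 0 r)) (Set.Icc 0 r) 0 :=
    hf'c 0 ⟨le_rfl, hr.le⟩
  have hev : ∀ᶠ x in nhdsWithin 0 (Set.Icc 0 r), 0 < derivWithin f (Set.Icc 0 r) x := by
    have h1 : Set.Ioi (0:ℝ) ∈ nhds (derivWithin f (Set.Icc 0 r) 0) := by
      rw [hf'0]; exact Ioi_mem_nhds one_pos
    exact hf'cont h1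
  obtain ⟨ε, hε, hball⟩ := Metric.mem_nhdsWithin_iff.mp hev
  set δ : ℝ := min (ε / 2) r with hδdef
  have hδpos : 0 < δ := lt_min (half_pos hε) hr
  have hδr : δ ≤ r := min_le_right _ _
  have hδder : ∀ x ∈ Set.Icc (0:ℝ) δ, 0 < derivWithin f (Set.Icc 0 r) x := by
    intro x hx
    have hx' : x ∈ Set.Icc (0:ℝ) r := ⟨hx.1, le_trans hx.2 hδr⟩
    refine hball ⟨?_, hx'⟩
    rw [Metric.mem_ball, Real.dist_eq, sub_zero, abs_of_nonneg hx.1]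
    exact lt_of_le_of_lt (le_trans hx.2 (min_le_left _ _)) (half_lt_self hε)
  have hfmono : MonotoneOn f (Set.Icc 0 δ) := by
    apply monotoneOn_of_deriv_nonneg (convex_Icc 0 δ)
      (hfc.mono (Set.Icc_subset_Icc le_rfl hδr))
    · rw [interior_Icc]
      intro x hx
      have hx' : x ∈ Set.Ioo (0:ℝ) r := ⟨hx.1, lt_of_lt_of_le hx.2 hδr⟩
      exact ((hf.contDiffAt (Icc_mem_nhds hx'.1 hx'.2)).differentiableAt
        two_ne_zero).differentiableWithinAt
    · rw [interior_Icc]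
      intro x hx
      have hx' : x ∈ Set.Ioo (0:ℝ) r := ⟨hx.1, lt_of_lt_of_le hx.2 hδr⟩
      rw [← derivWithin_of_mem_nhds (Icc_mem_nhds hx'.1 hx'.2)]
      exact (hδder x ⟨hx.1.le, hx.2.le⟩).le
  -- bound on g near 0
  have hgsmall : ∀ σ ∈ Set.Ioc (0:ℝ) δ, g σ ≤ σ * U := by
    intro σ hσ
    have hσr : σ ≤ r := le_trans hσ.2 hδr
    have hσIoc : σ ∈ Set.Ioc (0:ℝ) r := ⟨hσ.1, hσr⟩
    have hfσ : (0:ℝ) < f σ ^ (n - 1) := pow_pos (hfpos σ hσIoc) _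
    have hAb : A σ ≤ σ * (f σ ^ (n - 1) * U) := by
      have hb : ∀ x ∈ Set.uIoc (0:ℝ) σ, ‖F x‖ ≤ f σ ^ (n - 1) * U := by
        intro x hx
        rw [Set.uIoc_of_le hσ.1.le] at hx
        have hxI : x ∈ Set.Icc (0:ℝ) r := ⟨hx.1.le, le_trans hx.2 hσr⟩
        have hfx : f x ≤ f σ := hfmono ⟨hx.1.le, le_trans hx.2 hσ.2⟩
          ⟨hσ.1.le, hσ.2⟩ hx.2
        have h1 : ‖F x‖ = f x ^ (n - 1) * u x := by
          rw [hFdef, Real.norm_eq_abs, abs_of_nonneg (hFnn x hxI)]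
        rw [h1]
        refine mul_le_mul (pow_le_pow_left₀ (hfnn x hxI) hfx _)
          (le_trans (le_abs_self _) (hU x hxI)) (hunonneg x hxI)
          (pow_nonneg (hfnn σ (hIoc_sub hσIoc)) _)
      have := intervalIntegral.norm_integral_le_of_norm_le_const hb
      rw [sub_zero, abs_of_nonneg hσ.1.le] at this
      calc A σ ≤ ‖A σ‖ := le_abs_self _
        _ ≤ f σ ^ (n - 1) * U * σ := this
        _ = σ * (f σ ^ (n - 1) * U) := by ring
    rw [hgdef]
    calc (1 / f σ ^ (n - 1)) * A σ ≤ (1 / f σ ^ (n - 1)) * (σ * (f σ ^ (n - 1) * U)) := by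
          exact mul_le_mul_of_nonneg_left hAb (by positivity)
      _ = σ * U := by field_simp
  -- a uniform bound on g
  have hδsub : Set.Icc δ r ⊆ Set.Ioc 0 r := fun x hx => ⟨lt_of_lt_of_le hδpos hx.1, hx.2⟩
  obtain ⟨G₁, hG₁⟩ := isCompact_Icc.exists_bound_of_continuousOn (hgc.mono hδsub)
  set G : ℝ := max (δ * U) G₁ with hGdef
  have hG0 : 0 ≤ G := le_trans (mul_nonneg hδpos.le hU0) (le_max_left _ _)
  have hgG : ∀ σ ∈ Set.Ioc (0:ℝ) r, ‖g σ‖ ≤ G := by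
    intro σ hσ
    rw [Real.norm_eq_abs, abs_of_nonneg (hgnn σ hσ)]
    rcases le_or_gt σ δ with h | h
    · refine le_trans (hgsmall σ ⟨hσ.1, h⟩) (le_trans ?_ (le_max_left _ _))
      exact mul_le_mul_of_nonneg_right h hU0
    · refine le_trans ?_ (le_max_right _ _)
      have := hG₁ σ ⟨h.le, hσ.2⟩
      rw [Real.norm_eq_abs, abs_of_nonneg (hgnn σ hσ)] at this
      exact this
  -- bound on v
  have hvb : ∀ t ∈ Set.Ioo (0:ℝ) r, ‖v t‖ ≤ G * (r - t) := by
    intro t ht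
    rw [hvdef]
    have hb : ∀ x ∈ Set.uIoc t r, ‖g x‖ ≤ G := by
      intro x hx
      rw [Set.uIoc_of_le ht.2.le] at hx
      exact hgG x ⟨lt_trans ht.1 hx.1, hx.2⟩
    have := intervalIntegral.norm_integral_le_of_norm_le_const hb
    rwa [abs_of_nonneg (sub_nonneg.mpr ht.2.le)] at this
  have hvb' : ∀ t ∈ Set.Ioo (0:ℝ) r, ‖v t‖ ≤ G * r := by
    intro t ht
    refine le_trans (hvb t ht) (mul_le_mul_of_nonneg_left ?_ hG0)
    linarith [ht.1]
  -- bounds for P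
  obtain ⟨Mq, hMq⟩ := isCompact_Icc.exists_bound_of_continuousOn ((hfc.pow (n - 1)).mul hφ'c)
  obtain ⟨Mp, hMp⟩ := isCompact_Icc.exists_bound_of_continuousOn hφ'c
  have hMp0 : 0 ≤ Mp := le_trans (norm_nonneg _) (hMp 0 ⟨le_rfl, hr.le⟩)
  have hPeq : ∀ x ∈ Set.Ioo (0:ℝ) r, P x = f x ^ (n - 1) * derivWithin φ (Set.Icc 0 r) x := by
    intro x hx
    rw [hPdef, derivWithin_of_mem_nhds (Icc_mem_nhds hx.1 hx.2)]
  -- limit of W at r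
  have hφA_r : Filter.Tendsto (fun t => φ t * A t) (nhdsWithin r (Set.Ioo 0 r)) (nhds 0) := by
    have h1 : ContinuousWithinAt (fun t => φ t * A t) (Set.Icc 0 r) r :=
      (hφc.mul hAc) r ⟨hr.le, le_rfl⟩
    have h2 := h1.tendsto.mono_left (nhdsWithin_mono r hIoo_sub)
    simpa [hφr] using h2
  have hPv_r : Filter.Tendsto (fun t => P t * v t) (nhdsWithin r (Set.Ioo 0 r)) (nhds 0) := by
    apply squeeze_zero_norm'
    · filter_upwards [self_mem_nhdsWithin] with x hx
      calc ‖P x * v x‖ = ‖P x‖ * ‖v x‖ := norm_mul _ _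
        _ ≤ max Mq 0 * (G * (r - x)) := by
            refine mul_le_mul ?_ (hvb x hx) (norm_nonneg _) (le_max_right _ _)
            rw [hPeq x hx]
            exact le_trans (hMq x (hIoo_sub hx)) (le_max_left _ _)
    · have hco : Continuous fun x : ℝ => max Mq 0 * (G * (r - x)) := by fun_prop
      have h3 := (hco.tendsto r).mono_left (nhdsWithin_le_nhds (s := Set.Ioo 0 r))
      simpa using h3
  have hWr : Filter.Tendsto W (nhdsWithin r (Set.Iio r)) (nhds 0) := by
    have := hPv_r.add hφA_r
    rw [nhdsWithin_Ioo_eq_nhdsLT hr] at this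
    simpa [hWdef] using this
  -- limit of W at 0
  have hφA_0 : Filter.Tendsto (fun t => φ t * A t) (nhdsWithin 0 (Set.Ioo 0 r)) (nhds 0) := by
    have h1 : ContinuousWithinAt (fun t => φ t * A t) (Set.Icc 0 r) 0 :=
      (hφc.mul hAc) 0 ⟨le_rfl, hr.le⟩
    have h2 := h1.tendsto.mono_left (nhdsWithin_mono 0 hIoo_sub)
    have hA0 : A 0 = 0 := by simp [hAdef]
    simpa [hA0] using h2
  have hPv_0 : Filter.Tendsto (fun t => P t * v t) (nhdsWithin 0 (Set.Ioo 0 r)) (nhds 0) := by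
    apply squeeze_zero_norm'
    · filter_upwards [self_mem_nhdsWithin] with x hx
      calc ‖P x * v x‖ = ‖P x‖ * ‖v x‖ := norm_mul _ _
        _ ≤ f x ^ (n - 1) * Mp * (G * r) := by
            refine mul_le_mul ?_ (hvb' x hx) (norm_nonneg _) ?_
            · rw [hPeq x hx, norm_mul, Real.norm_eq_abs,
                abs_of_nonneg (pow_nonneg (hfnn x (hIoo_sub hx)) _)]
              exact mul_le_mul_of_nonneg_left (hMp x (hIoo_sub hx))
                (pow_nonneg (hfnn x (hIoo_sub hx)) _)
            · exact mul_nonneg (pow_nonneg (hfnn x (hIoo_sub hx)) _) hMp0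
    · have hf0t : Filter.Tendsto f (nhdsWithin 0 (Set.Ioo 0 r)) (nhds 0) := by
        have := (hfc 0 ⟨le_rfl, hr.le⟩).tendsto.mono_left (nhdsWithin_mono 0 hIoo_sub)
        rwa [hf0] at this
      have h4 : Filter.Tendsto (fun x => f x ^ (n - 1) * Mp * (G * r))
          (nhdsWithin 0 (Set.Ioo 0 r)) (nhds ((0:ℝ) ^ (n - 1) * Mp * (G * r))) :=
        ((hf0t.pow (n - 1)).mul_const Mp).mul_const (G * r)
      simpa [zero_pow (by omega : n - 1 ≠ 0)] using h4
  have hW0lim : Filter.Tendsto W (nhdsWithin 0 (Set.Ioi 0)) (nhds 0) := by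
    have := hPv_0.add hφA_0
    rw [nhdsWithin_Ioo_eq_nhdsGT hr] at this
    simpa [hWdef] using this
  -- hence W vanishes identically on (0, r)
  have hWzero : ∀ t ∈ Set.Ioo (0:ℝ) r, W t = 0 := by
    intro t ht
    have hle : W t ≤ 0 := by
      refine ge_of_tendsto hWr ?_
      filter_upwards [Ioo_mem_nhdsLT ht.2] with s hs
      exact hWmono ht ⟨lt_trans ht.1 hs.1, hs.2⟩ hs.1.le
    have hge : 0 ≤ W t := by
      refine le_of_tendsto hW0lim ?_
      filter_upwards [Ioo_mem_nhdsGT ht.1] with s hs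
      exact hWmono ⟨hs.1, lt_trans hs.2 ht.2⟩ ht hs.2.le
    linarith
  -- find a point where v is positive
  obtain ⟨s₀, hs₀, hus₀⟩ := hune
  have hus₀' : 0 < u s₀ := lt_of_le_of_ne (hunonneg s₀ hs₀) (Ne.symm hus₀)
  have hev2 : ∀ᶠ x in nhdsWithin s₀ (Set.Icc 0 r), u s₀ / 2 < u x :=
    (hu s₀ hs₀) (Ioi_mem_nhds (half_lt_self hus₀'))
  obtain ⟨ε₂, hε₂, hball₂⟩ := Metric.mem_nhdsWithin_iff.mp hev2
  set b : ℝ := min (s₀ + ε₂ / 2) r with hbdef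
  set a : ℝ := max (s₀ - ε₂ / 2) (b / 2) with hadef
  have hs₀b : s₀ ≤ b := le_min (by linarith [half_pos hε₂]) hs₀.2
  have hb0 : 0 < b := lt_min (by linarith [hs₀.1, half_pos hε₂]) hr
  have hbr : b ≤ r := min_le_right _ _
  have hab : a < b := max_lt (by linarith [half_pos hε₂]) (by linarith)
  have ha0 : 0 < a := lt_of_lt_of_le (half_pos hb0) (le_max_right _ _)
  have hble : b ≤ s₀ + ε₂ / 2 := min_le_left _ _
  have hage : s₀ - ε₂ / 2 ≤ a := le_max_left _ _
  have haIcc : ∀ x ∈ Set.Icc a b, u s₀ / 2 < u x := by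
    intro x hx
    refine hball₂ ⟨?_, ⟨le_trans ha0.le hx.1, le_trans hx.2 hbr⟩⟩
    rw [Metric.mem_ball, Real.dist_eq, abs_sub_lt_iff]
    constructor <;> [linarith [hx.2]; linarith [hx.1]]
  set m : ℝ := (a + b) / 2 with hmdef
  have ham : a < m := by rw [hmdef]; linarith
  have hmb : m < b := by rw [hmdef]; linarith
  have hm0 : 0 < m := lt_trans ha0 ham
  have hmr : m < r := lt_of_lt_of_le hmb hbr
  have hApos : ∀ σ ∈ Set.Icc m r, 0 < A σ := by
    intro σ hσ
    have haI : a ∈ Set.Icc (0:ℝ) r := ⟨ha0.le, le_trans hab.le hbr⟩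
    have hmI : m ∈ Set.Icc (0:ℝ) r := ⟨hm0.le, hmr.le⟩
    have hσI : σ ∈ Set.Icc (0:ℝ) r := ⟨le_trans hm0.le hσ.1, hσ.2⟩
    have h0I : (0:ℝ) ∈ Set.Icc (0:ℝ) r := ⟨le_rfl, hr.le⟩
    have e1 : A σ = (∫ s in (0:ℝ)..a, F s) + ∫ s in a..σ, F s := by
      rw [hAdef]
      exact (intervalIntegral.integral_add_adjacent_intervals
        (hFi 0 a h0I haI) (hFi a σ haI hσI)).symm
    have e2 : (∫ s in a..σ, F s) = (∫ s in a..m, F s) + ∫ s in m..σ, F s :=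
      (intervalIntegral.integral_add_adjacent_intervals
        (hFi a m haI hmI) (hFi m σ hmI hσI)).symm
    have p1 : 0 ≤ ∫ s in (0:ℝ)..a, F s :=
      intervalIntegral.integral_nonneg ha0.le
        (fun s hs => hFnn s ⟨hs.1, le_trans hs.2 haI.2⟩)
    have p3 : 0 ≤ ∫ s in m..σ, F s :=
      intervalIntegral.integral_nonneg hσ.1
        (fun s hs => hFnn s ⟨le_trans hm0.le hs.1, le_trans hs.2 hσ.2⟩)
    have p2 : 0 < ∫ s in a..m, F s := by
      refine intervalIntegral.intervalIntegral_pos_of_pos_on (hFi a m haI hmI) ?_ ham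
      intro x hx
      have hxI : x ∈ Set.Icc (0:ℝ) r := ⟨le_trans ha0.le hx.1.le, le_trans hx.2.le hmI.2⟩
      refine mul_pos (pow_pos (hfpos x ⟨lt_trans ha0 hx.1, hxI.2⟩) _) ?_
      exact lt_trans (half_pos hus₀') (haIcc x ⟨hx.1.le, le_trans hx.2.le hmb.le⟩)
    rw [e1, e2]
    linarith
  set t₀ : ℝ := (m + r) / 2 with ht₀def
  have hmt₀ : m < t₀ := by rw [ht₀def]; linarith
  have ht₀ : t₀ ∈ Set.Ioo (0:ℝ) r := ⟨lt_trans hm0 hmt₀, by rw [ht₀def]; linarith⟩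
  have hvpos : 0 < v t₀ := by
    rw [hvdef]
    refine intervalIntegral.intervalIntegral_pos_of_pos_on
      (hgi t₀ r ⟨ht₀.1, ht₀.2.le⟩ ⟨hr, le_rfl⟩) ?_ ht₀.2
    intro x hx
    have hxIoc : x ∈ Set.Ioc (0:ℝ) r := ⟨lt_trans ht₀.1 hx.1, hx.2.le⟩
    rw [hgdef]
    exact mul_pos (one_div_pos.mpr (pow_pos (hfpos x hxIoc) _))
      (hApos x ⟨le_trans hmt₀.le hx.1.le, hx.2.le⟩)
  -- final contradiction
  have hWev : W =ᶠ[nhds t₀] fun _ => (0:ℝ) := by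
    filter_upwards [hOpen.mem_nhds ht₀] with x hx
    exact hWzero x hx
  have hd0 : deriv W t₀ = 0 := by
    rw [hWev.deriv_eq]
    exact deriv_const t₀ 0
  have hd := (hW' t₀ ht₀).deriv
  rw [hd0] at hd
  have hφt₀ : 0 < φ t₀ := hφpos t₀ ⟨ht₀.1.le, ht₀.2⟩
  have hft₀ : 0 < f t₀ := hfpos t₀ (hIooIoc ht₀)
  have hut₀ : c * v t₀ ≤ u t₀ := by rw [← hBB t₀]; exact hc t₀ (hIoo_sub ht₀)
  have h1 : 0 < u t₀ - lam * v t₀ := by nlinarith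
  have h2 : 0 < f t₀ ^ (n - 1) * φ t₀ * (u t₀ - lam * v t₀) := by positivity
  linarith
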